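/- Trigonometric Pöschl-Teller reduction: if f satisfies the hypergeometric equation F((α+β+μ+1)/2, (α+β-μ+1)/2; 1+α; z)f = 0, then φ(r) := (sin r)^{α+1/2}(cos r)^{β+1/2} f(sin² r) satisfies -φ''(r) + [ (α² - 1/4)/sin² r + (β² - 1/4)/cos² r ] φ(r) = μ² φ(r) for r ∈ (0, π/2). -/

import Mathlib

open Real

lemma pt_key (p q : ℝ) (g : ℝ → ℝ) (g' : ℝ) (r : ℝ)
    (hs : 0 < Real.sin r) (hc : 0 < Real.cos r)
    (hg : HasDerivAt g g' (Real.sin r ^ 2)) :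
    HasDerivAt (fun t => Real.sin t ^ p * Real.cos t ^ q * g (Real.sin t ^ 2))
      ((p * Real.sin r ^ (p - 1) * Real.cos r ^ (q + 1)
          - q * Real.sin r ^ (p + 1) * Real.cos r ^ (q - 1)) * g (Real.sin r ^ 2)
        + 2 * Real.sin r ^ (p + 1) * Real.cos r ^ (q + 1) * g') r := by
  have hsp : HasDerivAt (fun t => Real.sin t ^ p)
      (Real.cos r * p * Real.sin r ^ (p - 1)) r :=
    (Real.hasDerivAt_sin r).rpow_const (Or.inl hs.ne')
  have hcq : HasDerivAt (fun t => Real.cos t ^ q)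
      (-Real.sin r * q * Real.cos r ^ (q - 1)) r :=
    (Real.hasDerivAt_cos r).rpow_const (Or.inl hc.ne')
  have hsin2 : HasDerivAt (fun t => Real.sin t ^ 2)
      (2 * Real.sin r * Real.cos r) r := by
    have := ((Real.hasDerivAt_sin r).fun_pow 2)
    simpa [mul_comm, mul_assoc, mul_left_comm] using this
  have hgc : HasDerivAt (fun t => g (Real.sin t ^ 2))
      (g' * (2 * Real.sin r * Real.cos r)) r := hg.comp r hsin2
  have := ((hsp.fun_mul hcq).fun_mul hgc)
  refine this.congr_deriv ?_
  rw [Real.rpow_add_one hs.ne', Real.rpow_add_one hc.ne']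
  ring

open Real in
/-- Trigonometric Pöschl–Teller reduction: if `f` solves the hypergeometric
equation with `a = (α+β+μ+1)/2`, `b = (α+β-μ+1)/2`, `c = 1+α` on `(0,1)`, then
`φ(r) = (sin r)^{α+1/2} (cos r)^{β+1/2} f(sin² r)` solves
`-φ'' + [(α²-1/4)/sin²r + (β²-1/4)/cos²r] φ = μ² φ` on `(0, π/2)`. -/
theorem poschl_teller_trigonometric
    (α β μ : ℝ) (f : ℝ → ℝ)
    (hf : ContDiffOn ℝ 2 f (Set.Ioo 0 1))
    (hfeq : ∀ z ∈ Set.Ioo (0:ℝ) 1,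
      z * (1 - z) * deriv (deriv f) z
        + ((1 + α) - ((α + β + μ + 1) / 2 + (α + β - μ + 1) / 2 + 1) * z)
            * deriv f z
        - ((α + β + μ + 1) / 2) * ((α + β - μ + 1) / 2) * f z = 0)
    (φ : ℝ → ℝ)
    (hφ : φ = fun t =>
      Real.sin t ^ (α + 1/2) * Real.cos t ^ (β + 1/2) * f (Real.sin t ^ 2)) :
    ∀ r ∈ Set.Ioo (0:ℝ) (π / 2),
      -deriv (deriv φ) r
          + ((α ^ 2 - 1/4) / Real.sin r ^ 2
              + (β ^ 2 - 1/4) / Real.cos r ^ 2) * φ r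
        = μ ^ 2 * φ r := by
  -- differentiability facts for f
  have hf2 : ContDiffOn ℝ (1 + 1) f (Set.Ioo 0 1) := by
    convert hf using 2
    norm_num
  have hf' : ContDiffOn ℝ 1 (deriv f) (Set.Ioo 0 1) :=
    ((contDiffOn_succ_iff_deriv_of_isOpen isOpen_Ioo).mp hf2).2.2
  have hfd : ∀ z ∈ Set.Ioo (0:ℝ) 1, HasDerivAt f (deriv f z) z := fun z hz =>
    ((hf.differentiableOn two_ne_zero z hz).differentiableAt
      (isOpen_Ioo.mem_nhds hz)).hasDerivAt
  have hfd2 : ∀ z ∈ Set.Ioo (0:ℝ) 1, HasDerivAt (deriv f) (deriv (deriv f) z) z := fun z hz =>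
    ((hf'.differentiableOn one_ne_zero z hz).differentiableAt
      (isOpen_Ioo.mem_nhds hz)).hasDerivAt
  -- the first derivative of φ
  set D : ℝ → ℝ := fun t =>
      (α + 1/2) * (Real.sin t ^ (α + 1/2 - 1) * Real.cos t ^ (β + 1/2 + 1)
          * f (Real.sin t ^ 2))
      + (-(β + 1/2)) * (Real.sin t ^ (α + 1/2 + 1) * Real.cos t ^ (β + 1/2 - 1)
          * f (Real.sin t ^ 2))
      + 2 * (Real.sin t ^ (α + 1/2 + 1) * Real.cos t ^ (β + 1/2 + 1)
          * deriv f (Real.sin t ^ 2)) with hD_def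
  have hmem : ∀ t ∈ Set.Ioo (0:ℝ) (π/2),
      0 < Real.sin t ∧ 0 < Real.cos t ∧ Real.sin t ^ 2 ∈ Set.Ioo (0:ℝ) 1 := by
    intro t ht
    have hs : 0 < Real.sin t := Real.sin_pos_of_pos_of_lt_pi ht.1
      (lt_trans ht.2 (by linarith [Real.pi_pos]))
    have hc : 0 < Real.cos t := Real.cos_pos_of_mem_Ioo
      ⟨by linarith [ht.1, Real.pi_pos], ht.2⟩
    refine ⟨hs, hc, ⟨by positivity, ?_⟩⟩
    nlinarith [Real.sin_sq_add_cos_sq t]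
  have hD : ∀ t ∈ Set.Ioo (0:ℝ) (π/2), HasDerivAt φ (D t) t := by
    intro t ht
    obtain ⟨hs, hc, hz⟩ := hmem t ht
    rw [hφ]
    have := pt_key (α + 1/2) (β + 1/2) f (deriv f (Real.sin t ^ 2)) t hs hc
      (hfd _ hz)
    convert this using 1
    simp only [hD_def]
    ring
  intro r hr
  obtain ⟨hs, hc, hz⟩ := hmem r hr
  -- second derivative: deriv (deriv φ) r = deriv D r
  have hev : deriv φ =ᶠ[nhds r] D :=
    Filter.eventuallyEq_of_mem (isOpen_Ioo.mem_nhds hr)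
      (fun t ht => (hD t ht).deriv)
  have h1 := (pt_key (α + 1/2 - 1) (β + 1/2 + 1) f (deriv f (Real.sin r ^ 2)) r hs hc
      (hfd _ hz)).const_mul (α + 1/2)
  have h2 := (pt_key (α + 1/2 + 1) (β + 1/2 - 1) f (deriv f (Real.sin r ^ 2)) r hs hc
      (hfd _ hz)).const_mul (-(β + 1/2))
  have h3 := (pt_key (α + 1/2 + 1) (β + 1/2 + 1) (deriv f)
      (deriv (deriv f) (Real.sin r ^ 2)) r hs hc (hfd2 _ hz)).const_mul (2:ℝ)
  have hDd := (h1.add h2).add h3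
  have hd2 : deriv (deriv φ) r =
      (α + 1/2) * ((((α + 1/2 - 1) * Real.sin r ^ (α + 1/2 - 1 - 1)
            * Real.cos r ^ (β + 1/2 + 1 + 1)
          - (β + 1/2 + 1) * Real.sin r ^ (α + 1/2 - 1 + 1)
            * Real.cos r ^ (β + 1/2 + 1 - 1)) * f (Real.sin r ^ 2)
        + 2 * Real.sin r ^ (α + 1/2 - 1 + 1) * Real.cos r ^ (β + 1/2 + 1 + 1)
            * deriv f (Real.sin r ^ 2)))
      + (-(β + 1/2)) * ((((α + 1/2 + 1) * Real.sin r ^ (α + 1/2 + 1 - 1)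
            * Real.cos r ^ (β + 1/2 - 1 + 1)
          - (β + 1/2 - 1) * Real.sin r ^ (α + 1/2 + 1 + 1)
            * Real.cos r ^ (β + 1/2 - 1 - 1)) * f (Real.sin r ^ 2)
        + 2 * Real.sin r ^ (α + 1/2 + 1 + 1) * Real.cos r ^ (β + 1/2 - 1 + 1)
            * deriv f (Real.sin r ^ 2)))
      + 2 * ((((α + 1/2 + 1) * Real.sin r ^ (α + 1/2 + 1 - 1)
            * Real.cos r ^ (β + 1/2 + 1 + 1)
          - (β + 1/2 + 1) * Real.sin r ^ (α + 1/2 + 1 + 1)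
            * Real.cos r ^ (β + 1/2 + 1 - 1)) * deriv f (Real.sin r ^ 2)
        + 2 * Real.sin r ^ (α + 1/2 + 1 + 1) * Real.cos r ^ (β + 1/2 + 1 + 1)
            * deriv (deriv f) (Real.sin r ^ 2))) := by
    rw [hev.deriv_eq]
    exact hDd.deriv
  -- canonicalize the rpow exponents
  have eS0 : ∀ x : ℝ, x = α + 1/2 →
      Real.sin r ^ x = Real.sin r ^ (α + 1/2 - 2) * Real.sin r ^ 2 := by
    rintro x rfl
    rw [← Real.rpow_natCast (Real.sin r) 2, ← Real.rpow_add hs]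
    congr 1
    push_cast; ring
  have eS2 : ∀ x : ℝ, x = α + 1/2 + 2 →
      Real.sin r ^ x
        = Real.sin r ^ (α + 1/2 - 2) * Real.sin r ^ 2 * Real.sin r ^ 2 := by
    rintro x rfl
    rw [← Real.rpow_natCast (Real.sin r) 2, ← Real.rpow_add hs, ← Real.rpow_add hs]
    congr 1
    push_cast; ring
  have eSm : ∀ x : ℝ, x = α + 1/2 - 2 →
      Real.sin r ^ x = Real.sin r ^ (α + 1/2 - 2) := by rintro x rfl; rfl
  have eC0 : ∀ x : ℝ, x = β + 1/2 →
      Real.cos r ^ x = Real.cos r ^ (β + 1/2 - 2) * Real.cos r ^ 2 := by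
    rintro x rfl
    rw [← Real.rpow_natCast (Real.cos r) 2, ← Real.rpow_add hc]
    congr 1
    push_cast; ring
  have eC2 : ∀ x : ℝ, x = β + 1/2 + 2 →
      Real.cos r ^ x
        = Real.cos r ^ (β + 1/2 - 2) * Real.cos r ^ 2 * Real.cos r ^ 2 := by
    rintro x rfl
    rw [← Real.rpow_natCast (Real.cos r) 2, ← Real.rpow_add hc, ← Real.rpow_add hc]
    congr 1
    push_cast; ring
  have eCm : ∀ x : ℝ, x = β + 1/2 - 2 →
      Real.cos r ^ x = Real.cos r ^ (β + 1/2 - 2) := by rintro x rfl; rfl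
  have hφr : φ r = Real.sin r ^ (α + 1/2) * Real.cos r ^ (β + 1/2)
      * f (Real.sin r ^ 2) := by rw [hφ]
  have heq := hfeq (Real.sin r ^ 2) hz
  have hpy : Real.cos r ^ 2 = 1 - Real.sin r ^ 2 := by
    nlinarith [Real.sin_sq_add_cos_sq r]
  rw [hd2, hφr,
      eS0 _ (by ring : α + 1/2 - 1 + 1 = α + 1/2),
      eS0 _ (by ring : α + 1/2 + 1 - 1 = α + 1/2),
      eS0 _ rfl,
      eS2 _ (by ring : α + 1/2 + 1 + 1 = α + 1/2 + 2),
      eSm _ (by ring : α + 1/2 - 1 - 1 = α + 1/2 - 2),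
      eC0 _ (by ring : β + 1/2 - 1 + 1 = β + 1/2),
      eC0 _ (by ring : β + 1/2 + 1 - 1 = β + 1/2),
      eC0 _ rfl,
      eC2 _ (by ring : β + 1/2 + 1 + 1 = β + 1/2 + 2),
      eCm _ (by ring : β + 1/2 - 1 - 1 = β + 1/2 - 2),
      hpy]
  have hsne : Real.sin r ^ 2 ≠ 0 := by positivity
  have hcne : (1:ℝ) - Real.sin r ^ 2 ≠ 0 := by rw [← hpy]; positivity
  linear_combination (norm := skip) ((-4)
      * Real.sin r ^ (α + 1/2 - 2) * Real.cos r ^ (β + 1/2 - 2)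
      * Real.sin r ^ 2 * (1 - Real.sin r ^ 2)) * heq
  field_simp
  ring
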